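/- If for all n ≥ 2 and m ≥ 2 one has per((H_{2^n} ⊗ I_{2^m})(I_{2^n} ⊗ H_{2^m})) ≥ per(H_{2^n} ⊗ I_{2^m}) · per(I_{2^n} ⊗ H_{2^m}), then per(H_{2^k}) > 0 for all k > 2. -/

import Mathlib

open Matrix Kronecker

def H2 : Matrix (Fin 2) (Fin 2) ℤ := !![1, 1; 1, -1]

/-- The Sylvester Hadamard matrix of order `2^k`, the Kronecker product of `k` copies of `H2`,
indexed by `k`-tuples (the entry at a pair of tuples is the product of the corresponding
entries of the factors). -/
def sylvester (k : ℕ) : Matrix (Fin k → Fin 2) (Fin k → Fin 2) ℤ :=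
  fun g h => ∏ i, H2 (g i) (h i)

open Equiv Finset in
/-- Permanent is invariant under simultaneous reindexing. -/
theorem permanent_submatrix_equiv {m n : Type*} [DecidableEq m] [Fintype m]
    [DecidableEq n] [Fintype n] (e : m ≃ n) (A : Matrix n n ℤ) :
    (A.submatrix e e).permanent = A.permanent := by
  rw [Matrix.permanent, Matrix.permanent]
  refine Fintype.sum_equiv (Equiv.permCongr e) _ _ fun σ => ?_
  calc ∏ i, A.submatrix e e (σ i) i = ∏ i, A (e.permCongr σ (e i)) (e i) := by
        simp [Equiv.permCongr_apply]
    _ = ∏ j, A (e.permCongr σ j) j := Equiv.prod_comp e (fun j => A (e.permCongr σ j) j)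

open Equiv Finset in
/-- Expansion of the permanent along column 0. -/
theorem permanent_succ_col_zero {n : ℕ} (A : Matrix (Fin n.succ) (Fin n.succ) ℤ) :
    A.permanent = ∑ i : Fin n.succ, A i 0 * (A.submatrix i.succAbove Fin.succ).permanent := by
  rw [Matrix.permanent, Finset.univ_perm_fin_succ, ← Finset.univ_product_univ,
    Finset.sum_map, Finset.sum_product]
  refine Finset.sum_congr rfl fun p _ => ?_
  rw [Matrix.permanent, Finset.mul_sum]
  simp only [Equiv.toEmbedding_apply]
  induction p using Fin.cases with
  | zero =>
    refine Finset.sum_congr rfl fun σ _ => ?_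
    rw [Fin.prod_univ_succ]
    simp [Fin.zero_succAbove]
  | succ i =>
    rw [← (Group.mulLeft_bijective (Fin.cycleRange i)).sum_comp
      (fun σ => A i.succ 0 * ∏ x, (A.submatrix i.succ.succAbove Fin.succ) (σ x) x)]
    refine Finset.sum_congr rfl fun σ _ => ?_
    rw [Fin.prod_univ_succ]
    simp [Fin.succAbove_cycleRange, Equiv.Perm.mul_apply]

/-- Helper for the fast permanent evaluator: sum over which column is picked for the
current row. -/
def pick (f : List ℕ → ℤ) (g : ℕ → ℤ) : List ℕ → List ℕ → ℤ
  | _, [] => 0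
  | pre, c :: post => g c * f (List.reverseAux pre post) + pick f g (c :: pre) post

/-- Fast permanent evaluator: `perR M n r cols` expands along rows `r, r+1, ...` with
available columns `cols`. -/
def perR (M : List (List ℤ)) : ℕ → ℕ → List ℕ → ℤ
  | 0, _, _ => 1
  | n+1, r, cols => pick (perR M n (r+1)) (fun c => (M.getD r []).getD c 0) [] cols

theorem pick_spec (f : List ℕ → ℤ) (g : ℕ → ℤ) :
    ∀ (n : ℕ) (v : Fin (n + 1) → ℕ) (pre : List ℕ),
      pick f g pre (List.ofFn v) =
        ∑ i : Fin (n + 1), g (v i) * f (pre.reverseAux (List.ofFn (v ∘ i.succAbove))) := by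
  intro n
  induction n with
  | zero => intro v pre; simp [pick, List.ofFn_succ]
  | succ n ih =>
    intro v pre
    rw [List.ofFn_succ, Fin.sum_univ_succ]
    show g (v 0) * f (pre.reverseAux (List.ofFn fun i => v i.succ))
        + pick f g (v 0 :: pre) (List.ofFn fun i => v i.succ) = _
    rw [ih (fun i => v i.succ) (v 0 :: pre)]
    congr 1
    refine Finset.sum_congr rfl fun j _ => ?_
    congr 1
    have h1 : List.ofFn (v ∘ j.succ.succAbove)
        = v 0 :: List.ofFn ((fun i => v i.succ) ∘ j.succAbove) := by
      rw [List.ofFn_succ]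
      congr 1
      · congr 1
        funext x
        simp [Fin.succ_succAbove_succ]
    rw [h1]
    rfl

theorem permanent_eq_perR (M : List (List ℤ)) :
    ∀ (n r : ℕ) (g : Fin n → ℕ) (A : Matrix (Fin n) (Fin n) ℤ),
      (∀ i j, A i j = (M.getD (r + (j : ℕ)) []).getD (g i) 0) →
      A.permanent = perR M n r (List.ofFn g) := by
  intro n
  induction n with
  | zero =>
    intro r g A _
    rw [Matrix.permanent_isEmpty]
    rfl
  | succ n ih =>
    intro r g A hA
    rw [permanent_succ_col_zero, perR, pick_spec]
    refine Finset.sum_congr rfl fun i _ => ?_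
    show A i 0 * _ = (M.getD r []).getD (g i) 0 * _
    rw [hA i 0]
    congr 1
    show _ = perR M n (r + 1) (List.ofFn (g ∘ i.succAbove))
    refine ih (r + 1) (g ∘ i.succAbove) _ fun i' j' => ?_
    show A (i.succAbove i') j'.succ = _
    rw [hA (i.succAbove i') j'.succ]
    congr 2
    show r + (j' + 1 : ℕ) = r + 1 + j'
    omega

open Equiv Finset in
theorem permanent_blockDiagonal {o : Type*} [Fintype o] [DecidableEq o]
    {p : Type*} [Fintype p] [DecidableEq p] (M : o → Matrix p p ℤ) :
    (blockDiagonal M).permanent = ∏ k, (M k).permanent := by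
  simp_rw [Matrix.permanent]
  rw [Finset.prod_sum]
  simp_rw [Finset.prod_attach_univ, Finset.univ_pi_univ]
  let preserving_snd : Finset (Equiv.Perm (p × o)) := {σ | ∀ x, (σ x).snd = x.snd}
  have mem_preserving_snd :
      ∀ {σ : Equiv.Perm (p × o)}, σ ∈ preserving_snd ↔ ∀ x, (σ x).snd = x.snd := fun {σ} =>
    Finset.mem_filter.trans ⟨fun h => h.2, fun h => ⟨Finset.mem_univ _, h⟩⟩
  rw [← Finset.sum_subset (Finset.subset_univ preserving_snd) _]
  · refine (Finset.sum_bij (fun σ _ => prodCongrLeft fun k ↦ σ k (mem_univ k)) ?_ ?_ ?_ ?_).symm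
    · intro σ _
      rw [mem_preserving_snd]
      rintro ⟨-, x⟩
      simp only [prodCongrLeft_apply]
    · intro σ _ σ' _ eq
      ext x hx k
      have :
        ∀ k x,
          prodCongrLeft (fun k => σ k (Finset.mem_univ _)) (k, x) =
            prodCongrLeft (fun k => σ' k (Finset.mem_univ _)) (k, x) :=
        fun k x => by rw [eq]
      simp only [prodCongrLeft_apply, Prod.mk_inj] at this
      exact (this k x).1
    · intro σ hσ
      rw [mem_preserving_snd] at hσ
      have hσ' : ∀ x, (σ⁻¹ x).snd = x.snd := by
        intro x
        conv_rhs => rw [← (σ.apply_symm_apply x : σ (σ⁻¹ x) = x), hσ]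
        rfl
      have mk_apply_eq : ∀ k x, ((σ (x, k)).fst, k) = σ (x, k) := by
        intro k x
        ext
        · simp only
        · simp only [hσ]
      have mk_inv_apply_eq : ∀ k x, ((σ⁻¹ (x, k)).fst, k) = σ⁻¹ (x, k) := by
        intro k x
        conv_lhs => rw [← (σ.apply_symm_apply (x, k) : σ (σ⁻¹ (x, k)) = (x, k))]
        ext
        · simp only [(σ.apply_symm_apply _ : σ (σ⁻¹ _) = _)]
        · simp only [hσ']
      refine ⟨fun k _ => ⟨fun x => (σ (x, k)).fst, fun x => (σ⁻¹ (x, k)).fst, ?_, ?_⟩, ?_, ?_⟩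
      · intro x
        simp only [mk_apply_eq, Equiv.Perm.inv_def, Equiv.symm_apply_apply]
      · intro x
        simp only [mk_inv_apply_eq]; rw [Equiv.Perm.inv_def, Equiv.apply_symm_apply]
      · apply Finset.mem_univ
      · ext ⟨k, x⟩
        · simp only [coe_fn_mk, prodCongrLeft_apply]
        · simp only [prodCongrLeft_apply, hσ]
    · intro σ _
      rw [← Finset.univ_product_univ, Finset.prod_product_right]
      simp only [blockDiagonal_apply_eq, prodCongrLeft_apply]
  · intro σ _ hσ
    rw [mem_preserving_snd] at hσ
    obtain ⟨⟨k, x⟩, hkx⟩ := not_forall.mp hσ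
    exact Finset.prod_eq_zero (Finset.mem_univ (k, x)) (blockDiagonal_apply_ne _ _ _ hkx)

theorem kron_one_eq {I J : Type*} [Fintype I] [DecidableEq I] [Fintype J] [DecidableEq J]
    (A : Matrix I I ℤ) : A ⊗ₖ (1 : Matrix J J ℤ) = blockDiagonal fun _ : J => A := by
  ext ⟨i, k⟩ ⟨j, k'⟩
  simp [Matrix.blockDiagonal_apply, Matrix.one_apply, mul_ite]

theorem one_kron_eq {I J : Type*} [Fintype I] [DecidableEq I] [Fintype J] [DecidableEq J]
    (A : Matrix I I ℤ) : (1 : Matrix J J ℤ) ⊗ₖ A =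
      (blockDiagonal fun _ : J => A).submatrix (Equiv.prodComm J I) (Equiv.prodComm J I) := by
  ext ⟨k, i⟩ ⟨k', j⟩
  simp [Matrix.blockDiagonal_apply, Matrix.one_apply, ite_mul]

def splitEquiv (n m : ℕ) : (Fin (n + m) → Fin 2) ≃ (Fin n → Fin 2) × (Fin m → Fin 2) :=
  (Equiv.arrowCongr finSumFinEquiv.symm (Equiv.refl (Fin 2))).trans
    (Equiv.sumArrowEquivProdArrow _ _ _)

theorem sylvester_add (n m : ℕ) :
    sylvester (n + m) =
      (sylvester n ⊗ₖ sylvester m).submatrix (splitEquiv n m) (splitEquiv n m) := by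
  ext g h
  show (∏ i, H2 (g i) (h i)) = _
  rw [← Equiv.prod_comp finSumFinEquiv (fun i => H2 (g i) (h i)), Fintype.prod_sum_type]
  rfl

def e3 : (Fin 3 → Fin 2) ≃ Fin 8 := finFunctionFinEquiv

def B3 : Matrix (Fin 8) (Fin 8) ℤ := (sylvester 3).submatrix e3.symm e3.symm

def rows8 : List (List ℤ) :=
  [[1,1,1,1,1,1,1,1],[1,-1,1,-1,1,-1,1,-1],[1,1,-1,-1,1,1,-1,-1],[1,-1,-1,1,1,-1,-1,1],
   [1,1,1,1,-1,-1,-1,-1],[1,-1,1,-1,-1,1,-1,1],[1,1,-1,-1,-1,-1,1,1],[1,-1,-1,1,-1,1,1,-1]]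

theorem per_sylvester2 : 0 < (sylvester 2).permanent := by decide

set_option maxRecDepth 100000 in
theorem per_sylvester3 : 0 < (sylvester 3).permanent := by
  have h1 : (sylvester 3).permanent = B3.permanent :=
    (permanent_submatrix_equiv e3.symm (sylvester 3)).symm
  have h2 : B3.permanent = perR rows8 8 0 (List.ofFn fun i : Fin 8 => (i : ℕ)) := by
    refine permanent_eq_perR rows8 8 0 _ B3 fun i j => ?_
    revert i j
    have : ∀ (i j : Fin 8), decide (B3 i j = (rows8.getD (0 + ↑j) []).getD (↑i) 0) = true := by decide +kernel
    simpa using this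
  rw [h1, h2]
  decide +kernel

theorem permanent_sylvester_pos
    (hyp : ∀ n m : ℕ, 2 ≤ n → 2 ≤ m →
      ((sylvester n ⊗ₖ (1 : Matrix (Fin m → Fin 2) (Fin m → Fin 2) ℤ)) *
          ((1 : Matrix (Fin n → Fin 2) (Fin n → Fin 2) ℤ) ⊗ₖ sylvester m)).permanent ≥
        (sylvester n ⊗ₖ (1 : Matrix (Fin m → Fin 2) (Fin m → Fin 2) ℤ)).permanent *
          ((1 : Matrix (Fin n → Fin 2) (Fin n → Fin 2) ℤ) ⊗ₖ sylvester m).permanent) :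
    ∀ k : ℕ, 2 < k → 0 < (sylvester k).permanent := by
  have key : ∀ k : ℕ, 2 ≤ k → 0 < (sylvester k).permanent := by
    intro k
    induction k using Nat.strong_induction_on with
    | _ k ih =>
      intro hk
      by_cases h2 : k = 2
      · subst h2; exact per_sylvester2
      by_cases h3 : k = 3
      · subst h3; exact per_sylvester3
      obtain ⟨m, rfl⟩ : ∃ m, k = 2 + m := ⟨k - 2, by omega⟩
      have hm : 2 ≤ m := by omega
      have p1 : 0 < (sylvester 2).permanent := ih 2 (by omega) (by omega)
      have pm : 0 < (sylvester m).permanent := ih m (by omega) hm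
      have e1 : (sylvester (2 + m)).permanent
          = ((sylvester 2 ⊗ₖ (1 : Matrix (Fin m → Fin 2) (Fin m → Fin 2) ℤ)) *
             ((1 : Matrix (Fin 2 → Fin 2) (Fin 2 → Fin 2) ℤ) ⊗ₖ sylvester m)).permanent := by
        rw [sylvester_add, permanent_submatrix_equiv, ← Matrix.mul_kronecker_mul,
          Matrix.one_mul, Matrix.mul_one]
      have e2 : (sylvester 2 ⊗ₖ (1 : Matrix (Fin m → Fin 2) (Fin m → Fin 2) ℤ)).permanent
          = (sylvester 2).permanent ^ Fintype.card (Fin m → Fin 2) := by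
        rw [kron_one_eq, permanent_blockDiagonal, Finset.prod_const, Finset.card_univ]
      have e3' : ((1 : Matrix (Fin 2 → Fin 2) (Fin 2 → Fin 2) ℤ) ⊗ₖ sylvester m).permanent
          = (sylvester m).permanent ^ Fintype.card (Fin 2 → Fin 2) := by
        rw [one_kron_eq, permanent_submatrix_equiv, permanent_blockDiagonal,
          Finset.prod_const, Finset.card_univ]
      rw [e1]
      refine lt_of_lt_of_le ?_ (hyp 2 m le_rfl hm)
      rw [e2, e3']
      exact mul_pos (pow_pos p1 _) (pow_pos pm _)
  intro k hk
  exact key k (by omega)
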